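/- Let D = {0, a, b, c} with 0 < a < c odd, b even, gcd(a,b,c) = 1, and let μ = μ_{4,D}. If 0 ∈ Λ ⊂ ℝ is an orthogonal set for μ, then either Λ \ {0} ⊆ Z₀ ∪ Z₃, or Λ \ {0} ⊆ Z_j ∪ Z₃' for j = 1 or j = 2. In particular, if t is even, then either Λ \ {0} ⊆ Z₃, or Λ \ {0} ⊆ Z_j ∪ Z₃' for j = 1 or j = 2. -/

import Mathlib

open MeasureTheory Finset Polynomial
open scoped Classical

noncomputable section

/-- The self-similar set `K(b, D)`, i.e. the attractor of the IFS
`{x ↦ (x+d)/b : d ∈ D}`, described by radix expansions. -/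
def Kset (b : ℕ) (D : Finset ℤ) : Set ℝ :=
  {x : ℝ | ∃ f : ℕ → ℤ, (∀ n, f n ∈ D) ∧
    HasSum (fun n : ℕ => (f n : ℝ) / (b : ℝ) ^ (n + 1)) x}

/-- `J` is a tiling set for `K`: translates of `K` by `J` cover `ℝ` up to a null
set and overlap in null sets. -/
def IsTilingSet (J K : Set ℝ) : Prop :=
  J.Countable ∧
  volume ((⋃ t ∈ J, (fun x : ℝ => x + t) '' K)ᶜ) = 0 ∧
  ∀ t₁ ∈ J, ∀ t₂ ∈ J, t₁ ≠ t₂ →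
    volume (((fun x : ℝ => x + t₁) '' K) ∩ ((fun x : ℝ => x + t₂) '' K)) = 0

def IsTile (K : Set ℝ) : Prop := ∃ J : Set ℝ, IsTilingSet J K

/-- The exponential `e_λ(x) = exp(2πiλx)`. -/
def expChar (lam x : ℝ) : ℂ :=
  Complex.exp (2 * (Real.pi : ℂ) * Complex.I * (lam : ℂ) * (x : ℂ))

/-- The exponentials indexed by `Λ` are pairwise orthogonal in `L²(μ)`. -/
def IsOrthogonalSetFor (Λ : Set ℝ) (μ : Measure ℝ) : Prop :=
  ∀ l₁ ∈ Λ, ∀ l₂ ∈ Λ, l₁ ≠ l₂ →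
    ∫ x : ℝ, expChar l₁ x * (starRingEnd ℂ) (expChar l₂ x) ∂μ = 0

/-- `Λ` is a spectrum of the measure `μ`: `0 ∈ Λ`, the exponentials `e_λ, λ ∈ Λ`
are pairwise orthogonal in `L²(μ)`, and their span is dense in `L²(μ)`
(equivalently, only the zero element of `L²(μ)` is orthogonal to all of them). -/
def IsSpectrumOfMeasure (Λ : Set ℝ) (μ : Measure ℝ) : Prop :=
  Λ.Countable ∧ (0 : ℝ) ∈ Λ ∧ IsOrthogonalSetFor Λ μ ∧
  ∀ f : ℝ → ℂ, MemLp f 2 μ →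
    (∀ lam ∈ Λ, ∫ x : ℝ, f x * (starRingEnd ℂ) (expChar lam x) ∂μ = 0) →
    f =ᵐ[μ] 0

/-- A set of positive finite Lebesgue measure is spectral if `L²(K)` admits an
orthogonal family of exponentials spanning a dense subspace. -/
def IsSpectralSet (K : Set ℝ) : Prop :=
  ∃ Λ : Set ℝ, IsSpectrumOfMeasure Λ (volume.restrict K)

/-- `Γ` is a spectrum of the finite set `A ⊂ ℤ` (w.r.t. the normalized counting
measure on `A`): `#Γ = #A` and the exponentials are pairwise orthogonal. -/
def IsSpectrumOfIntFinset (Γ : Finset ℝ) (A : Finset ℤ) : Prop :=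
  Γ.card = A.card ∧
  ∀ l₁ ∈ Γ, ∀ l₂ ∈ Γ, l₁ ≠ l₂ →
    ∑ a ∈ A, Complex.exp (2 * (Real.pi : ℂ) * Complex.I * ((l₁ - l₂ : ℝ) : ℂ) * (a : ℂ)) = 0

def IsSpectralIntFinset (A : Finset ℤ) : Prop :=
  ∃ Γ : Finset ℝ, IsSpectrumOfIntFinset Γ A

/-- `μ` is the self-similar measure of the pair `(b, D)`. -/
def IsSelfSimilarMeasure (b : ℕ) (D : Finset ℤ) (μ : Measure ℝ) : Prop :=
  IsProbabilityMeasure μ ∧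
  μ = (D.card : ENNReal)⁻¹ • ∑ d ∈ D, Measure.map (fun x : ℝ => (x + (d : ℝ)) / (b : ℝ)) μ

/-- `A` is an integer tile: `A ⊕ B ≡ ℤ_n (mod n)` for some `n` and finite `B`. -/
def IsIntegerTile (A : Finset ℤ) : Prop :=
  ∃ n : ℕ, 0 < n ∧ ∃ B : Finset ℤ,
    ∀ r : ZMod n, ∃! p : ℤ × ℤ, p.1 ∈ A ∧ p.2 ∈ B ∧ ((p.1 + p.2 : ℤ) : ZMod n) = r

/-- The sumset `E 0 + E 1 + ⋯ + E k`. -/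
def famSum (k : ℕ) (E : ℕ → Finset ℤ) : Finset ℤ :=
  (Fintype.piFinset fun i : Fin (k + 1) => E i.val).image fun f => ∑ i, f i

/-- The sum `E 0 ⊕ E 1 ⊕ ⋯ ⊕ E k` is direct: all sums are distinct. -/
def FamilyUniqueSums (k : ℕ) (E : ℕ → Finset ℤ) : Prop :=
  ∀ f g : Fin (k + 1) → ℤ, (∀ i, f i ∈ E i.val) → (∀ i, g i ∈ E i.val) →
    ∑ i, f i = ∑ i, g i → f = g

/-- `F` is a complete residue system modulo `b`. -/
def IsCompleteResidueSystem (b : ℕ) (F : Finset ℤ) : Prop :=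
  ∀ r : ZMod b, ∃! x, x ∈ F ∧ (x : ZMod b) = r

/-- The product-form digit set `D = E₀ + b^{ℓ₁}E₁ + ⋯ + b^{ℓ_k}E_k` (with `ℓ 0 = 0`). -/
def Dprod (b k : ℕ) (E : ℕ → Finset ℤ) (ℓ : ℕ → ℕ) : Finset ℤ :=
  (Fintype.piFinset fun i : Fin (k + 1) => E i.val).image
    fun f => ∑ i, (b : ℤ) ^ (ℓ i.val) * f i

/-- The sum defining the product form is direct. -/
def ProdFormDirect (b k : ℕ) (E : ℕ → Finset ℤ) (ℓ : ℕ → ℕ) : Prop :=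
  ∀ f g : Fin (k + 1) → ℤ, (∀ i, f i ∈ E i.val) → (∀ i, g i ∈ E i.val) →
    ∑ i, (b : ℤ) ^ (ℓ i.val) * f i = ∑ i, (b : ℤ) ^ (ℓ i.val) * g i → f = g

/-- The set `A = ⊕_{i} ⊕_{j=0}^{ℓ_i - 1} b^j E_i` (the `i = 0` term is void when `ℓ 0 = 0`). -/
def Aset (b k : ℕ) (E : ℕ → Finset ℤ) (ℓ : ℕ → ℕ) : Finset ℤ :=
  (Fintype.piFinset fun q : Σ i : Fin (k + 1), Fin (ℓ i.val) => E q.1.val).image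
    fun f => ∑ q : Σ i : Fin (k + 1), Fin (ℓ i.val), (b : ℤ) ^ (q.2 : ℕ) * f q

/-- Mask polynomial `P_F(x) = ∑_{d ∈ F} x^d` of a finite set of nonnegative integers. -/
def maskPoly (F : Finset ℤ) : Polynomial ℤ := ∑ d ∈ F, Polynomial.X ^ d.toNat

/-- `Ψ(x) = ∏_{d ∈ S} Φ_d(x)` where `S = {d > 1 : d ∣ b, Φ_d ∣ P_F}`. -/
def PsiPoly (b : ℕ) (F : Finset ℤ) : Polynomial ℤ :=
  ∏ d ∈ b.divisors.filter (fun d => 1 < d ∧ cyclotomic d ℤ ∣ maskPoly F), cyclotomic d ℤ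

/-- `K_D^{(i)}(x) = Ψ₀(x)Ψ₁(x^{b^{ℓ₁}}) ⋯ Ψ_i(x^{b^{ℓ_i}})`. -/
def Kpoly (b : ℕ) (E : ℕ → Finset ℤ) (ℓ : ℕ → ℕ) (i : ℕ) : Polynomial ℤ :=
  ∏ j ∈ Finset.range (i + 1), Polynomial.expand ℤ (b ^ (ℓ j)) (PsiPoly b (E j))

/-- `nIdx Q = lcm {s ≥ 1 : Φ_s ∣ Q}` (any `s` with `Φ_s ∣ Q` satisfies
`φ(s) ≤ deg Q`, hence `s ≤ 2 (deg Q + 1)²`, so the range is exhaustive). -/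
def nIdx (Q : Polynomial ℤ) : ℕ :=
  ((Finset.Icc 1 (2 * (Q.natDegree + 1) ^ 2)).filter fun s => cyclotomic s ℤ ∣ Q).lcm id

/-- `F' ≡ F (mod n)`: each element of `F` is changed by some integer multiple of `n`
(keeping the elements distinct). -/
def ModSet (n : ℕ) (F F' : Finset ℤ) : Prop :=
  ∃ g : ℤ → ℤ, F' = F.image g ∧ (∀ x ∈ F, (n : ℤ) ∣ g x - x) ∧ F'.card = F.card

/-- The sumset `Dprev + b^{ℓi} Ei`. -/
def stepSum (b : ℕ) (ℓi : ℕ) (Dprev Ei : Finset ℤ) : Finset ℤ :=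
  (Dprev ×ˢ Ei).image fun p => p.1 + (b : ℤ) ^ ℓi * p.2

/-- The sum `Dprev ⊕ b^{ℓi} Ei` is direct. -/
def StepDirect (b : ℕ) (ℓi : ℕ) (Dprev Ei : Finset ℤ) : Prop :=
  ∀ d₁ ∈ Dprev, ∀ e₁ ∈ Ei, ∀ d₂ ∈ Dprev, ∀ e₂ ∈ Ei,
    d₁ + (b : ℤ) ^ ℓi * e₁ = d₂ + (b : ℤ) ^ ℓi * e₂ → d₁ = d₂ ∧ e₁ = e₂

/-- `Dseq` is the sequence `D^{(0)}, …, D^{(k)}` of the modulo product-form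
construction for `E₀ ⊕ ⋯ ⊕ E_k = ℤ_b` and `0 = ℓ₀ ≤ ℓ₁ ≤ ⋯ ≤ ℓ_k`:
`D^{(0)} ≡ E₀ (mod n₀)` and `D^{(i)} ≡ D^{(i-1)} ⊕ b^{ℓ_i}E_i (mod n_i)`. -/
def IsModuloProductForm (b k : ℕ) (E : ℕ → Finset ℤ) (ℓ : ℕ → ℕ)
    (Dseq : ℕ → Finset ℤ) : Prop :=
  famSum k E = (Finset.range b).image (fun j => (j : ℤ)) ∧
  FamilyUniqueSums k E ∧
  ℓ 0 = 0 ∧ (∀ i j, i ≤ j → j ≤ k → ℓ i ≤ ℓ j) ∧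
  ModSet (nIdx (Kpoly b E ℓ 0)) (E 0) (Dseq 0) ∧
  ∀ i, 1 ≤ i → i ≤ k →
    StepDirect b (ℓ i) (Dseq (i - 1)) (E i) ∧
    ModSet (nIdx (Kpoly b E ℓ i)) (stepSum b (ℓ i) (Dseq (i - 1)) (E i)) (Dseq i)

/-- The double sum `⊕_{i=0}^{k-1} ⊕_{j=t_i}^{t_{i+1}-1} b^j F(k-i-1)`. -/
def doubleSum (b k : ℕ) (t : ℕ → ℕ) (F : ℕ → Finset ℤ) : Finset ℤ :=
  (Fintype.piFinset
      (fun q : Σ i : Fin k, {j : ℕ // j ∈ Finset.Ico (t i.val) (t (i.val + 1))} =>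
        F (k - q.1.val - 1))).image
    fun f => ∑ q : Σ i : Fin k, {j : ℕ // j ∈ Finset.Ico (t i.val) (t (i.val + 1))},
      (b : ℤ) ^ (q.2.val) * f q

/-- `𝒞_i = p̃_{i-1}·{0, 1, …, p_i − 1}` where `p̃_{i-1} = p₀⋯p_{i-1}`. -/
def Cset (p : ℕ → ℕ) (i : ℕ) : Finset ℤ :=
  (Finset.range (p i)).image fun j => (∏ l ∈ Finset.range i, (p l : ℤ)) * j

/-- The set of zeros of `ξ ↦ 1 + e^{2πiaξ} + e^{2πibξ} + e^{2πicξ}`. -/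
def maskZeroSet (a b c : ℤ) : Set ℝ :=
  {ξ : ℝ | (1 : ℂ) + Complex.exp (2 * (Real.pi : ℂ) * Complex.I * (a : ℂ) * (ξ : ℂ))
      + Complex.exp (2 * (Real.pi : ℂ) * Complex.I * (b : ℂ) * (ξ : ℂ))
      + Complex.exp (2 * (Real.pi : ℂ) * Complex.I * (c : ℂ) * (ξ : ℂ)) = 0}

/-- `(1/q)𝕆 = {m/q : m odd}`. -/
def oddFracSet (q : ℝ) : Set ℝ := {x | ∃ m : ℤ, Odd m ∧ x = (m : ℝ) / q}

/-- `⋃_{n ≥ 1} 4^n (1/q)𝕆`. -/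
def Zsc (q : ℝ) : Set ℝ :=
  {x | ∃ n : ℕ, 1 ≤ n ∧ ∃ m : ℤ, Odd m ∧ x = (4 : ℝ) ^ n * (m : ℝ) / q}


/-! ### Auxiliary machinery for stmt16 -/

/-- `e(θ) = exp(2πiθ)`. -/
def eC (θ : ℝ) : ℂ := Complex.exp (2 * (Real.pi : ℂ) * Complex.I * (θ : ℂ))

lemma expChar_eq (lam x : ℝ) : expChar lam x = eC (lam * x) := by
  unfold expChar eC; push_cast; ring_nf

lemma eC_zero : eC 0 = 1 := by simp [eC]

lemma norm_eC (θ : ℝ) : ‖eC θ‖ = 1 := by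
  unfold eC
  rw [Complex.norm_exp]
  have : (2 * (Real.pi : ℂ) * Complex.I * (θ : ℂ)).re = 0 := by
    simp [Complex.mul_re, Complex.mul_im]
  rw [this, Real.exp_zero]

lemma eC_add (s t : ℝ) : eC (s + t) = eC s * eC t := by
  unfold eC; rw [← Complex.exp_add]; push_cast; ring_nf

lemma eC_ne_zero (θ : ℝ) : eC θ ≠ 0 := Complex.exp_ne_zero _

lemma conj_eC (θ : ℝ) : (starRingEnd ℂ) (eC θ) = eC (-θ) := by
  unfold eC
  rw [← Complex.exp_conj]
  congr 1
  simp only [map_mul, map_ofNat, Complex.conj_I, Complex.conj_ofReal]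
  push_cast; ring

lemma expChar_mul_conj (l₁ l₂ x : ℝ) :
    expChar l₁ x * (starRingEnd ℂ) (expChar l₂ x) = eC ((l₁ - l₂) * x) := by
  rw [expChar_eq, expChar_eq, conj_eC, ← eC_add]; ring_nf

lemma eC_eq_neg_one_iff (θ : ℝ) : eC θ = -1 ↔ ∃ m : ℤ, Odd m ∧ 2 * θ = m := by
  have hπI : (Real.pi : ℂ) * Complex.I ≠ 0 :=
    mul_ne_zero (Complex.ofReal_ne_zero.2 Real.pi_ne_zero) Complex.I_ne_zero
  constructor
  · intro h
    unfold eC at h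
    have h2 : Complex.exp (2 * (Real.pi : ℂ) * Complex.I * (θ : ℂ) + Real.pi * Complex.I) = 1 := by
      rw [Complex.exp_add, h, Complex.exp_pi_mul_I]; ring
    rw [Complex.exp_eq_one_iff] at h2
    obtain ⟨n, hn⟩ := h2
    refine ⟨2 * n - 1, ⟨n - 1, by ring⟩, ?_⟩
    have h4 : ((2 * θ + 1 - 2 * n : ℝ) : ℂ) * ((Real.pi : ℂ) * Complex.I) = 0 := by
      push_cast; linear_combination hn
    have h5 : ((2 * θ + 1 - 2 * n : ℝ) : ℂ) = 0 := by
      rcases mul_eq_zero.1 h4 with h | h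
      · exact h
      · exact absurd h hπI
    have h6 : (2 * θ + 1 - 2 * n : ℝ) = 0 := by exact_mod_cast h5
    push_cast; linarith
  · rintro ⟨m, ⟨j, hj⟩, hm⟩
    have hr : θ = (j : ℝ) + 1/2 := by
      rw [hj] at hm; push_cast at hm; linarith
    have hθ : (θ : ℂ) = (j : ℂ) + 1/2 := by
      rw [hr]; push_cast; ring
    rw [eC, hθ, show 2 * (Real.pi:ℂ) * Complex.I * ((j:ℂ) + 1/2)
        = (j : ℂ) * (2 * Real.pi * Complex.I) + Real.pi * Complex.I by ring]
    rw [Complex.exp_add, Complex.exp_int_mul_two_pi_mul_I, Complex.exp_pi_mul_I]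
    ring

lemma four_units {z₁ z₂ z₃ : ℂ} (h₁ : ‖z₁‖ = 1) (h₂ : ‖z₂‖ = 1) (h₃ : ‖z₃‖ = 1)
    (h : 1 + z₁ + z₂ + z₃ = 0) :
    (z₁ = -1 ∧ z₂ + z₃ = 0) ∨ (z₂ = -1 ∧ z₁ + z₃ = 0) ∨ (z₃ = -1 ∧ z₁ + z₂ = 0) := by
  have c₁ : z₁ * (starRingEnd ℂ) z₁ = 1 := by
    rw [Complex.mul_conj]; simp [Complex.normSq_eq_norm_sq, h₁]
  have c₂ : z₂ * (starRingEnd ℂ) z₂ = 1 := by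
    rw [Complex.mul_conj]; simp [Complex.normSq_eq_norm_sq, h₂]
  have c₃ : z₃ * (starRingEnd ℂ) z₃ = 1 := by
    rw [Complex.mul_conj]; simp [Complex.normSq_eq_norm_sq, h₃]
  have hc : 1 + (starRingEnd ℂ) z₁ + (starRingEnd ℂ) z₂ + (starRingEnd ℂ) z₃ = 0 := by
    have := congrArg (starRingEnd ℂ) h
    simpa using this
  have key : (1 + z₁) * (1 + z₂) * (1 + z₃) = 0 := by
    have h2 : z₁ * z₂ * z₃ + z₂ * z₃ + z₁ * z₃ + z₁ * z₂ = 0 := by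
      linear_combination z₁*z₂*z₃*hc - z₂*z₃*c₁ - z₁*z₃*c₂ - z₁*z₂*c₃
    linear_combination h + h2
  rcases mul_eq_zero.1 key with h12 | h3
  · rcases mul_eq_zero.1 h12 with h1 | h2
    · left
      have hz : z₁ = -1 := by linear_combination h1
      exact ⟨hz, by linear_combination h - hz⟩
    · right; left
      have hz : z₂ = -1 := by linear_combination h2
      exact ⟨hz, by linear_combination h - hz⟩
  · right; right
    have hz : z₃ = -1 := by linear_combination h3
    exact ⟨hz, by linear_combination h - hz⟩

lemma continuous_eC : Continuous eC := by
  unfold eC; fun_prop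

lemma integrable_eC (ν : Measure ℝ) [IsFiniteMeasure ν] (ξ : ℝ) :
    Integrable (fun x => eC (ξ * x)) ν := by
  have hc : Continuous fun x : ℝ => eC (ξ * x) := continuous_eC.comp (by fun_prop)
  exact (integrable_const (1:ℝ)).mono' hc.aestronglyMeasurable
    (Filter.Eventually.of_forall fun x => by rw [norm_eC])

/-- the mask of the IFS -/
def Mk (a b c : ℤ) (η : ℝ) : ℂ :=
  (1 + eC ((a : ℝ) * η) + eC ((b : ℝ) * η) + eC ((c : ℝ) * η)) / 4

lemma mask_mem {a b c : ℤ} (η : ℝ) (h : Mk a b c η = 0) : η ∈ maskZeroSet a b c := by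
  unfold Mk at h
  have h4 : (1:ℂ) + eC ((a : ℝ) * η) + eC ((b : ℝ) * η) + eC ((c : ℝ) * η) = 0 := by
    linear_combination 4 * h
  unfold maskZeroSet
  simp only [Set.mem_setOf_eq]
  have ea : eC ((a : ℝ) * η) = Complex.exp (2 * (Real.pi : ℂ) * Complex.I * (a : ℂ) * (η : ℂ)) := by
    unfold eC; push_cast; ring_nf
  have eb : eC ((b : ℝ) * η) = Complex.exp (2 * (Real.pi : ℂ) * Complex.I * (b : ℂ) * (η : ℂ)) := by
    unfold eC; push_cast; ring_nf
  have ec : eC ((c : ℝ) * η) = Complex.exp (2 * (Real.pi : ℂ) * Complex.I * (c : ℂ) * (η : ℂ)) := by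
    unfold eC; push_cast; ring_nf
  rw [← ea, ← eb, ← ec]; exact h4

section analytic
variable {a b c : ℤ} {μ : Measure ℝ}

lemma card_D (ha : 0 < a) (hac : a < c) (haodd : Odd a) (hcodd : Odd c)
    (hbeven : Even b) (hb : 0 < b) : ({0, a, b, c} : Finset ℤ).card = 4 := by
  have hab : a ≠ b := fun h => (Int.not_odd_iff_even.2 (h ▸ hbeven)) haodd
  have hcb : c ≠ b := fun h => (Int.not_odd_iff_even.2 (h ▸ hbeven)) hcodd
  have h0a : (0:ℤ) ≠ a := ha.ne
  have h0b : (0:ℤ) ≠ b := hb.ne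
  have h0c : (0:ℤ) ≠ c := (ha.trans hac).ne
  have hacne : a ≠ c := hac.ne
  rw [Finset.card_insert_of_notMem (by simp [h0a, h0b, h0c]),
      Finset.card_insert_of_notMem (by simp [hab, hacne]),
      Finset.card_insert_of_notMem (by simp [hcb.symm]),
      Finset.card_singleton]

/-- the Fourier transform recursion -/
lemma F_rec (ha : 0 < a) (hac : a < c) (haodd : Odd a) (hcodd : Odd c)
    (hbeven : Even b) (hb : 0 < b)
    (hμ : IsSelfSimilarMeasure 4 ({0, a, b, c} : Finset ℤ) μ) (ξ : ℝ) :
    ∫ x, eC (ξ * x) ∂μ = Mk a b c (ξ/4) * ∫ x, eC ((ξ/4) * x) ∂μ := by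
  have hprob : IsProbabilityMeasure μ := hμ.1
  have hcard := card_D ha hac haodd hcodd hbeven hb
  have hmap := hμ.2
  rw [hcard] at hmap
  have hmeas : ∀ d : ℤ, Measurable fun x : ℝ => (x + (d:ℝ)) / ((4:ℕ):ℝ) := by
    intro d; fun_prop
  have hint : ∀ d ∈ ({0, a, b, c} : Finset ℤ),
      Integrable (fun x => eC (ξ * x)) (Measure.map (fun x : ℝ => (x + (d : ℝ)) / ((4:ℕ) : ℝ)) μ) := by
    intro d _
    have : IsProbabilityMeasure (Measure.map (fun x : ℝ => (x + (d : ℝ)) / ((4:ℕ) : ℝ)) μ) :=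
      Measure.isProbabilityMeasure_map (hmeas d).aemeasurable
    exact integrable_eC _ ξ
  conv_lhs => rw [hmap]
  rw [integral_smul_measure, integral_finset_sum_measure hint]
  have hterm : ∀ d : ℤ, ∫ y, eC (ξ * y) ∂(Measure.map (fun x : ℝ => (x + (d : ℝ)) / ((4:ℕ):ℝ)) μ)
      = eC (ξ * d / 4) * ∫ x, eC ((ξ/4) * x) ∂μ := by
    intro d
    have hf : Continuous fun y : ℝ => eC (ξ * y) :=
      continuous_eC.comp (continuous_const.mul continuous_id)
    rw [integral_map (hmeas d).aemeasurable hf.aestronglyMeasurable]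
    have : ∀ x : ℝ, eC (ξ * ((x + (d:ℝ)) / ((4:ℕ):ℝ))) = eC (ξ * d / 4) * eC ((ξ/4) * x) := by
      intro x
      rw [← eC_add]; congr 1; push_cast; ring
    simp only [this]
    rw [integral_const_mul]
  simp only [hterm]
  rw [← Finset.sum_mul]
  have hsum : ∑ d ∈ ({0, a, b, c} : Finset ℤ), eC (ξ * (d:ℝ) / 4)
      = 1 + eC ((a:ℝ) * (ξ/4)) + eC ((b:ℝ) * (ξ/4)) + eC ((c:ℝ) * (ξ/4)) := by
    have hab : a ≠ b := fun h => (Int.not_odd_iff_even.2 (h ▸ hbeven)) haodd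
    have hcb : c ≠ b := fun h => (Int.not_odd_iff_even.2 (h ▸ hbeven)) hcodd
    have h0a : (0:ℤ) ≠ a := ha.ne
    have h0b : (0:ℤ) ≠ b := hb.ne
    have h0c : (0:ℤ) ≠ c := (ha.trans hac).ne
    have hacne : a ≠ c := hac.ne
    rw [Finset.sum_insert (by simp [h0a, h0b, h0c]),
        Finset.sum_insert (by simp [hab, hacne]),
        Finset.sum_insert (by simp [hcb.symm]),
        Finset.sum_singleton]
    rw [show ξ * ((0:ℤ):ℝ) / 4 = 0 by push_cast; ring, eC_zero]
    rw [show ξ * ((a:ℤ):ℝ) / 4 = (a:ℝ) * (ξ/4) by ring]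
    rw [show ξ * ((b:ℤ):ℝ) / 4 = (b:ℝ) * (ξ/4) by ring]
    rw [show ξ * ((c:ℤ):ℝ) / 4 = (c:ℝ) * (ξ/4) by ring]
    ring
  rw [hsum]
  unfold Mk
  rw [show ((4:ℕ) : ENNReal)⁻¹.toReal = (1/4 : ℝ) by simp]
  rw [Complex.real_smul]
  push_cast
  ring

lemma F_iter (hμ : IsProbabilityMeasure μ)
    (hrec : ∀ ξ : ℝ, ∫ x, eC (ξ * x) ∂μ = Mk a b c (ξ/4) * ∫ x, eC ((ξ/4) * x) ∂μ)
    (ξ : ℝ) (n : ℕ) :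
    ∫ x, eC (ξ * x) ∂μ
      = (∏ k ∈ Finset.range n, Mk a b c (ξ / 4 ^ (k+1))) * ∫ x, eC ((ξ / 4 ^ n) * x) ∂μ := by
  induction n with
  | zero => simp
  | succ n ih =>
    rw [ih, hrec (ξ / 4 ^ n), Finset.prod_range_succ]
    rw [show ξ / 4 ^ n / 4 = ξ / 4 ^ (n + 1) by rw [div_div, ← pow_succ]]
    ring

lemma F_tendsto (hμ : IsProbabilityMeasure μ) (ξ : ℝ) :
    Filter.Tendsto (fun n : ℕ => ∫ x, eC ((ξ / 4 ^ n) * x) ∂μ) Filter.atTop (nhds 1) := by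
  have h1 : (∫ x : ℝ, (1 : ℂ) ∂μ) = 1 := by simp
  rw [← h1]
  apply tendsto_integral_of_dominated_convergence (fun _ => (1:ℝ))
  · intro n
    exact (continuous_eC.comp (continuous_const.mul continuous_id)).aestronglyMeasurable
  · exact integrable_const 1
  · intro n
    exact Filter.Eventually.of_forall fun x => le_of_eq (norm_eC _)
  · refine Filter.Eventually.of_forall fun x => ?_
    have hx : Filter.Tendsto (fun n : ℕ => (ξ / 4 ^ n) * x) Filter.atTop (nhds 0) := by
      have h4 : Filter.Tendsto (fun n : ℕ => (ξ * x) * (1/4) ^ n) Filter.atTop (nhds 0) := by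
        rw [show (0:ℝ) = (ξ * x) * 0 by ring]
        exact (tendsto_pow_atTop_nhds_zero_of_lt_one (by norm_num) (by norm_num)).const_mul _
      refine h4.congr fun n => ?_
      field_simp
      rw [mul_assoc, ← mul_pow]; norm_num
    have := (continuous_eC.tendsto 0).comp hx
    rwa [eC_zero] at this

lemma exists_mask_zero (hμ : IsProbabilityMeasure μ)
    (hrec : ∀ ξ : ℝ, ∫ x, eC (ξ * x) ∂μ = Mk a b c (ξ/4) * ∫ x, eC ((ξ/4) * x) ∂μ)
    (ξ : ℝ) (h : ∫ x, eC (ξ * x) ∂μ = 0) :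
    ∃ k : ℕ, 1 ≤ k ∧ Mk a b c (ξ / 4 ^ k) = 0 := by
  have hlim := F_tendsto hμ ξ
  have hev : ∀ᶠ n in Filter.atTop, ‖(∫ x, eC ((ξ / 4 ^ n) * x) ∂μ) - 1‖ < 1 := by
    have := Filter.Tendsto.sub hlim (tendsto_const_nhds (x := (1:ℂ)))
    rw [sub_self] at this
    exact (NormedAddCommGroup.tendsto_nhds_zero.mp this) 1 one_pos
  obtain ⟨N, hN⟩ := hev.exists
  have hFN : (∫ x, eC ((ξ / 4 ^ N) * x) ∂μ) ≠ 0 := by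
    intro h0
    rw [h0] at hN
    simp at hN
  have := F_iter hμ hrec ξ N
  rw [h] at this
  have hprod : (∏ k ∈ Finset.range N, Mk a b c (ξ / 4 ^ (k+1))) = 0 := by
    by_contra hne
    exact (mul_ne_zero hne hFN) this.symm
  obtain ⟨k, hk, hzero⟩ := Finset.prod_eq_zero_iff.mp hprod
  exact ⟨k + 1, Nat.succ_le_succ (Nat.zero_le _), hzero⟩
end analytic

lemma eC_sum_zero {s t : ℝ} (h : eC s + eC t = 0) : eC (t - s) = -1 := by
  have h1 : eC s * (1 + eC (t - s)) = 0 := by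
    rw [mul_add, mul_one, ← eC_add]
    rw [show s + (t - s) = t by ring]
    exact h
  rcases mul_eq_zero.1 h1 with h2 | h2
  · exact absurd h2 (eC_ne_zero s)
  · linear_combination h2

/-- extract gcd relation from two odd multiples -/
lemma odd_gcd_extract {A B u v : ℤ} (hA : Odd A) (hu : Odd u) (hv : Odd v)
    (huv : u * B = v * A) :
    ∃ w : ℤ, Odd w ∧ u = (A / (Int.gcd A B : ℤ)) * w := by
  have hA0 : A ≠ 0 := by rintro rfl; exact (by simp : ¬ Odd (0:ℤ)) hA
  have hg0 : 0 < Int.gcd A B := Int.gcd_pos_of_ne_zero_left B hA0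
  set g : ℤ := (Int.gcd A B : ℤ) with hgdef
  have hgA : g ∣ A := (Int.gcd_dvd_left _ _)
  have hgB : g ∣ B := (Int.gcd_dvd_right _ _)
  set A' := A / g with hA'def
  set B' := B / g with hB'def
  have hAeq : A = g * A' := (Int.ediv_mul_cancel hgA).symm.trans (mul_comm _ _)
  have hBeq : B = g * B' := (Int.ediv_mul_cancel hgB).symm.trans (mul_comm _ _)
  have hgne : g ≠ 0 := by positivity
  have hcop : IsCoprime A' B' := by
    rw [Int.isCoprime_iff_gcd_eq_one]
    exact Int.gcd_div_gcd_div_gcd hg0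
  have hkey : u * B' = v * A' := by
    apply mul_left_cancel₀ hgne
    calc g * (u * B') = u * (g * B') := by ring
    _ = v * (g * A') := by rw [← hBeq, ← hAeq]; exact huv
    _ = g * (v * A') := by ring
  have hdvd : A' ∣ u := hcop.dvd_of_dvd_mul_right ⟨v, by linarith [hkey]⟩
  obtain ⟨w, hw⟩ := hdvd
  refine ⟨w, ?_, hw⟩
  rcases Int.even_or_odd w with he | ho
  · exfalso
    rw [hw] at hu
    exact (Int.not_odd_iff_even).2 (he.mul_left A') hu
  · exact ho

lemma odd_pair_combine {A B : ℤ} (hA : Odd A) (hB : Odd B) {ξ : ℝ} {u v : ℤ}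
    (hu : Odd u) (hv : Odd v) (h1 : 2 * ((A : ℝ) * ξ) = u) (h2 : 2 * ((B : ℝ) * ξ) = v) :
    ∃ w : ℤ, Odd w ∧ 2 * (Int.gcd A B : ℝ) * ξ = w := by
  have hA0 : A ≠ 0 := by rintro rfl; exact (by simp : ¬ Odd (0:ℤ)) hA
  have huv : u * B = v * A := by
    have : ((u * B : ℤ) : ℝ) = ((v * A : ℤ) : ℝ) := by
      push_cast
      rw [← h1, ← h2]; ring
    exact_mod_cast this
  obtain ⟨w, hwodd, hw⟩ := odd_gcd_extract hA hu hv huv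
  refine ⟨w, hwodd, ?_⟩
  set g : ℤ := (Int.gcd A B : ℤ) with hgdef
  have hgA : g ∣ A := (Int.gcd_dvd_left _ _)
  have hAeq : A = g * (A / g) := (Int.ediv_mul_cancel hgA).symm.trans (mul_comm _ _)
  have hA'0 : (A / g : ℤ) ≠ 0 := by
    intro h0
    rw [h0, mul_zero] at hAeq
    exact hA0 hAeq
  have hA'R : ((A / g : ℤ) : ℝ) ≠ 0 := Int.cast_ne_zero.2 hA'0
  apply mul_left_cancel₀ hA'R
  have hcast : ((A:ℝ)) = (g:ℝ) * ((A/g : ℤ):ℝ) := by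
    exact_mod_cast congrArg (fun z : ℤ => (z:ℝ)) hAeq
  calc ((A/g : ℤ):ℝ) * (2 * (Int.gcd A B : ℝ) * ξ)
      = 2 * ((A:ℝ) * ξ) := by rw [hcast, hgdef]; push_cast; ring
    _ = ((u : ℤ) : ℝ) := h1
    _ = ((A/g : ℤ):ℝ) * w := by rw [hw]; push_cast; ring

lemma odd_pair_combine_two {t t' : ℕ} {l l' : ℤ} (hl : Odd l) (hl' : Odd l') {ξ : ℝ}
    {u v : ℤ} (hu : Odd u) (hv : Odd v)
    (h1 : 2 * (((2^t * l : ℤ) : ℝ) * ξ) = u) (h2 : 2 * (((2^t' * l' : ℤ) : ℝ) * ξ) = v) :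
    t = t' ∧ ∃ w : ℤ, Odd w ∧ 2^(t+1) * (Int.gcd l l' : ℝ) * ξ = w := by
  have huv : u * (2^t' * l') = v * (2^t * l) := by
    have h1' := h1; have h2' := h2
    push_cast at h1' h2'
    have : ((u * (2^t' * l') : ℤ) : ℝ) = ((v * (2^t * l) : ℤ) : ℝ) := by
      push_cast
      linear_combination -((2:ℝ)^t' * (l':ℝ)) * h1' + ((2:ℝ)^t * (l:ℝ)) * h2'
    exact_mod_cast this
  have htt : t = t' := by
    by_contra hne
    rcases Nat.lt_or_ge t t' with hlt | hge
    · have hkey : u * (2^(t'-t) * l') = v * l := by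
        have h2t : (2:ℤ)^t ≠ 0 := by positivity
        apply mul_left_cancel₀ h2t
        calc (2:ℤ)^t * (u * (2^(t'-t) * l')) = u * (2^t * 2^(t'-t) * l') := by ring
          _ = u * (2^t' * l') := by rw [← pow_add, Nat.add_sub_cancel' hlt.le]
          _ = v * (2^t * l) := huv
          _ = (2:ℤ)^t * (v * l) := by ring
      have heven : Even (u * (2^(t'-t) * l')) := by
        have : (2:ℤ) ∣ 2^(t'-t) := dvd_pow_self 2 (by omega)
        obtain ⟨r, hr⟩ := this
        exact ⟨u * r * l', by rw [hr]; ring⟩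
      rw [hkey] at heven
      exact (Int.not_odd_iff_even).2 heven (hv.mul hl)
    · have hlt : t' < t := by omega
      have hkey : v * (2^(t-t') * l) = u * l' := by
        have h2t : (2:ℤ)^t' ≠ 0 := by positivity
        apply mul_left_cancel₀ h2t
        calc (2:ℤ)^t' * (v * (2^(t-t') * l)) = v * (2^t' * 2^(t-t') * l) := by ring
          _ = v * (2^t * l) := by rw [← pow_add, Nat.add_sub_cancel' hlt.le]
          _ = u * (2^t' * l') := huv.symm
          _ = (2:ℤ)^t' * (u * l') := by ring
      have heven : Even (v * (2^(t-t') * l)) := by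
        have : (2:ℤ) ∣ 2^(t-t') := dvd_pow_self 2 (by omega)
        obtain ⟨r, hr⟩ := this
        exact ⟨v * r * l, by rw [hr]; ring⟩
      rw [hkey] at heven
      exact (Int.not_odd_iff_even).2 heven (hu.mul hl')
  subst htt
  refine ⟨rfl, ?_⟩
  have huv2 : u * l' = v * l := by
    have h2t : (2:ℤ)^t ≠ 0 := by positivity
    apply mul_left_cancel₀ h2t
    calc (2:ℤ)^t * (u * l') = u * (2^t * l') := by ring
      _ = v * (2^t * l) := huv
      _ = (2:ℤ)^t * (v * l) := by ring
  obtain ⟨w, hwodd, hw⟩ := odd_gcd_extract hl hu hv huv2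
  refine ⟨w, hwodd, ?_⟩
  set g : ℤ := (Int.gcd l l' : ℤ) with hgdef
  have hl0 : l ≠ 0 := by rintro rfl; exact (by simp : ¬ Odd (0:ℤ)) hl
  have hgA : g ∣ l := (Int.gcd_dvd_left _ _)
  have hAeq : l = g * (l / g) := (Int.ediv_mul_cancel hgA).symm.trans (mul_comm _ _)
  have hA'0 : (l / g : ℤ) ≠ 0 := by
    intro h0; rw [h0, mul_zero] at hAeq; exact hl0 hAeq
  have hA'R : ((l / g : ℤ) : ℝ) ≠ 0 := Int.cast_ne_zero.2 hA'0
  apply mul_left_cancel₀ hA'R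
  have hcast : ((l:ℝ)) = (g:ℝ) * ((l/g : ℤ):ℝ) :=
    by exact_mod_cast congrArg (fun z : ℤ => (z:ℝ)) hAeq
  calc ((l/g : ℤ):ℝ) * (2^(t+1) * (Int.gcd l l' : ℝ) * ξ)
      = 2 * (((2^t * l : ℤ):ℝ) * ξ) := by rw [hgdef] at hcast; push_cast [hcast]; ring
    _ = ((u : ℤ) : ℝ) := h1
    _ = ((l/g : ℤ):ℝ) * w := by rw [hw]; push_cast; ring

lemma mask_zero_cases (a b c : ℤ) (t t' : ℕ) (l l' : ℤ)
    (haodd : Odd a) (hcodd : Odd c) (hbeven : Even b)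
    (hbe : b = 2^t * l) (hcae : c - a = 2^t' * l')
    (hl : Odd l) (hl' : Odd l') (η : ℝ) (hmem : η ∈ maskZeroSet a b c) :
    (∃ w : ℤ, Odd w ∧ 2 * (Int.gcd a (c - b) : ℝ) * η = w) ∨
    (∃ w : ℤ, Odd w ∧ 2 * (Int.gcd c (b - a) : ℝ) * η = w) ∨
    (t = t' ∧ ∃ w : ℤ, Odd w ∧ 2^(t+1) * (Int.gcd l l' : ℝ) * η = w) := by
  have hmem' : (1:ℂ) + eC ((a:ℝ) * η) + eC ((b:ℝ) * η) + eC ((c:ℝ) * η) = 0 := by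
    have ea : eC ((a : ℝ) * η) = Complex.exp (2 * (Real.pi : ℂ) * Complex.I * (a : ℂ) * (η : ℂ)) := by
      unfold eC; push_cast; ring_nf
    have eb : eC ((b : ℝ) * η) = Complex.exp (2 * (Real.pi : ℂ) * Complex.I * (b : ℂ) * (η : ℂ)) := by
      unfold eC; push_cast; ring_nf
    have ec : eC ((c : ℝ) * η) = Complex.exp (2 * (Real.pi : ℂ) * Complex.I * (c : ℂ) * (η : ℂ)) := by
      unfold eC; push_cast; ring_nf
    rw [ea, eb, ec]; exact hmem
  rcases four_units (norm_eC _) (norm_eC _) (norm_eC _) hmem' with ⟨hz, hsum⟩ | ⟨hz, hsum⟩ | ⟨hz, hsum⟩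
  · left
    obtain ⟨u, hu, hueq⟩ := (eC_eq_neg_one_iff _).1 hz
    have h2 : eC ((c:ℝ)*η - (b:ℝ)*η) = -1 := eC_sum_zero hsum
    obtain ⟨v, hv, hveq⟩ := (eC_eq_neg_one_iff _).1 h2
    have hcbodd : Odd (c - b) :=
      Int.odd_sub.2 ⟨fun _ => hbeven, fun _ => hcodd⟩
    exact odd_pair_combine haodd hcbodd hu hv hueq
      (by rw [show ((c - b : ℤ):ℝ) * η = ((c:ℝ)*η - (b:ℝ)*η) by push_cast; ring]; exact hveq)
  · right; right
    obtain ⟨u, hu, hueq⟩ := (eC_eq_neg_one_iff _).1 hz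
    have h2 : eC ((c:ℝ)*η - (a:ℝ)*η) = -1 := eC_sum_zero hsum
    obtain ⟨v, hv, hveq⟩ := (eC_eq_neg_one_iff _).1 h2
    exact odd_pair_combine_two hl hl' hu hv
      (by rw [show (((2^t * l : ℤ)):ℝ) * η = (b:ℝ)*η by rw [← hbe]]; exact hueq)
      (by rw [show (((2^t' * l' : ℤ)):ℝ) * η = ((c:ℝ)*η - (a:ℝ)*η) by rw [← hcae]; push_cast; ring]; exact hveq)
  · right; left
    obtain ⟨u, hu, hueq⟩ := (eC_eq_neg_one_iff _).1 hz
    have h2 : eC ((b:ℝ)*η - (a:ℝ)*η) = -1 := eC_sum_zero hsum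
    obtain ⟨v, hv, hveq⟩ := (eC_eq_neg_one_iff _).1 h2
    have hbaodd : Odd (b - a) :=
      Int.odd_sub.2 ⟨fun hob => absurd hob (Int.not_odd_iff_even.2 hbeven),
        fun hea => absurd hea (Int.not_even_iff_odd.2 haodd)⟩
    exact odd_pair_combine hcodd hbaodd hu hv hueq
      (by rw [show ((b - a : ℤ):ℝ) * η = ((b:ℝ)*η - (a:ℝ)*η) by push_cast; ring]; exact hveq)

lemma Zsc_of_eq {q : ℝ} (hq : q ≠ 0) {x : ℝ} {k : ℕ} (hk : 1 ≤ k) {w : ℤ} (hw : Odd w)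
    (h : q * (x / 4^k) = w) : x ∈ Zsc q := by
  refine ⟨k, hk, w, hw, ?_⟩
  have h4 : ((4:ℝ))^k ≠ 0 := by positivity
  rw [← h]
  field_simp

section endgame
variable (P : Fin 3 → ℕ) (t : ℕ)

def eEx (t : ℕ) : Fin 3 → ℕ := ![1, 1, t+1]
def cof (P : Fin 3 → ℕ) (t : ℕ) : Fin 3 → ℕ :=
  ![2^t * P 1 * P 2, 2^t * P 0 * P 2, P 0 * P 1]
def Qv (P : Fin 3 → ℕ) (t : ℕ) : ℕ := 2^(t+1) * (P 0 * P 1 * P 2)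
def ZS (P : Fin 3 → ℕ) (t : ℕ) (i : Fin 3) : Set ℝ := Zsc ((2:ℝ)^(eEx t i) * P i)
def Wit (P : Fin 3 → ℕ) (t : ℕ) (i : Fin 3) (x : ℝ) : Prop :=
  ∃ r γ : ℕ, r.Prime ∧ 0 < γ ∧ r^γ ∣ P i ∧
    ∀ N : ℤ, x * ((Qv P t : ℕ) : ℝ) = N → ¬ ((r:ℤ)^γ ∣ N)

variable (hPodd : ∀ i, Odd (P i)) (hPpos : ∀ i, 0 < P i)
variable (hcop : ∀ i j, i ≠ j → Nat.Coprime (P i) (P j))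

lemma Q_split (i : Fin 3) : Qv P t = 2^(eEx t i) * P i * cof P t i := by
  fin_cases i <;> simp [Qv, cof, eEx] <;> ring

lemma cof_dvd (i j : Fin 3) (hij : j ≠ i) : P j ∣ cof P t i := by
  fin_cases i <;> fin_cases j
  · exact absurd rfl hij
  · exact ⟨2^t * P 2, by simp [cof]; ring⟩
  · exact ⟨2^t * P 1, by simp [cof]; ring⟩
  · exact ⟨2^t * P 2, by simp [cof]; ring⟩
  · exact absurd rfl hij
  · exact ⟨2^t * P 0, by simp [cof]; ring⟩
  · exact ⟨P 1, by simp [cof]⟩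
  · exact ⟨P 0, by simp [cof]; ring⟩
  · exact absurd rfl hij

include hPpos in
lemma rep_lemma (i : Fin 3) {x : ℝ} (hx : x ∈ ZS P t i) :
    ∃ (k : ℕ) (m : ℤ), 1 ≤ k ∧ Odd m ∧
      x * ((Qv P t : ℕ) : ℝ) = (((cof P t i : ℕ) : ℤ) * 4^k * m : ℤ) ∧
      (((P i : ℕ) : ℤ) ∣ m → x ∈ Zsc ((2:ℝ)^(eEx t i))) := by
  obtain ⟨n, hn, m, hm, hxe⟩ := hx
  have hPne : ((2:ℝ)^(eEx t i) * (P i : ℝ)) ≠ 0 := by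
    have := hPpos i
    positivity
  have h1 : x * ((2:ℝ)^(eEx t i) * (P i : ℝ)) = 4^n * m := by
    rw [hxe]; field_simp; exact mul_div_cancel_right₀ _ (by have := hPpos i; positivity)
  refine ⟨n, m, hn, hm, ?_, ?_⟩
  · have hQ : ((Qv P t : ℕ) : ℝ) = ((2:ℝ)^(eEx t i) * (P i : ℝ)) * ((cof P t i : ℕ) : ℝ) := by
      rw [Q_split P t i]; push_cast; ring
    rw [hQ, ← mul_assoc, h1]
    push_cast; ring
  · rintro ⟨m₁, hm₁⟩
    have hm₁odd : Odd m₁ := by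
      rcases Int.even_or_odd m₁ with he | ho
      · exfalso
        rw [hm₁] at hm
        exact (Int.not_odd_iff_even).2 (he.mul_left _) hm
      · exact ho
    refine ⟨n, hn, m₁, hm₁odd, ?_⟩
    rw [hxe, hm₁]
    have hP0 : ((P i : ℕ) : ℝ) ≠ 0 := by
      have := hPpos i; positivity
    push_cast
    field_simp

include hPodd hPpos hcop in
lemma wit_lemma (i : Fin 3) {x : ℝ} (hx : x ∈ ZS P t i)
    (hnt : x ∉ Zsc ((2:ℝ)^(eEx t i))) : Wit P t i x := by
  obtain ⟨k, m, hk, hm, hxQ, htriv⟩ := rep_lemma P t hPpos i hx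
  have hPm : ¬ ((P i : ℤ) ∣ m) := fun h => hnt (htriv h)
  have hm0 : m ≠ 0 := by rintro rfl; exact (by simp : ¬ Odd (0:ℤ)) hm
  have hM0 : m.natAbs ≠ 0 := Int.natAbs_ne_zero.2 hm0
  have hP0 : P i ≠ 0 := (hPpos i).ne'
  have hPM : ¬ (P i ∣ m.natAbs) := by
    intro h
    exact hPm (Int.dvd_natAbs.1 (Int.natCast_dvd_natCast.2 h))
  have hfac : ¬ ((P i).factorization ≤ m.natAbs.factorization) := by
    rw [Nat.factorization_le_iff_dvd hP0 hM0]
    exact hPM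
  rw [Finsupp.le_def] at hfac
  push_neg at hfac
  obtain ⟨r, hr⟩ := hfac
  set γ := (P i).factorization r with hγdef
  have hγpos : 0 < γ := lt_of_le_of_lt (Nat.zero_le _) hr
  have hrprime : r.Prime := by
    have : r ∈ (P i).factorization.support := by
      rw [Finsupp.mem_support_iff]; omega
    exact Nat.prime_of_mem_primeFactors (by rwa [Nat.support_factorization] at this)
  have hrP : r^γ ∣ P i := Nat.ordProj_dvd _ _
  have hrdvdP : r ∣ P i := dvd_trans (dvd_pow_self r hγpos.ne') hrP
  have hrodd : r ≠ 2 := by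
    intro h2
    have : Even (P i) := (even_iff_two_dvd).2 (h2 ▸ hrdvdP)
    exact (Nat.not_odd_iff_even).2 this (hPodd i)
  refine ⟨r, γ, hrprime, hγpos, hrP, ?_⟩
  intro N hN hdvd
  have hNeq : N = ((cof P t i : ℕ) : ℤ) * 4^k * m := by
    have : ((N:ℤ):ℝ) = ((((cof P t i : ℕ) : ℤ) * 4^k * m : ℤ) : ℝ) := by
      rw [← hN, hxQ]
    exact_mod_cast this
  have hnotPj : ∀ j, j ≠ i → ¬ r ∣ P j := by
    intro j hj hdvdj
    have h1 : r ∣ Nat.gcd (P i) (P j) := Nat.dvd_gcd hrdvdP hdvdj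
    rw [hcop i j (Ne.symm hj)] at h1
    exact hrprime.one_lt.ne' (Nat.dvd_one.1 h1)
  have hnot2pow : ∀ s : ℕ, ¬ r ∣ 2^s := by
    intro s hdvds
    have := (Nat.prime_dvd_prime_iff_eq hrprime Nat.prime_two).1 (hrprime.dvd_of_dvd_pow hdvds)
    exact hrodd this
  -- pass to ℕ
  have hdvdN : r^γ ∣ (cof P t i * 4^k) * m.natAbs := by
    have h1 : ((r:ℤ)^γ) ∣ ((cof P t i : ℕ) : ℤ) * 4^k * m := hNeq ▸ hdvd
    have h3 := Int.natAbs_dvd_natAbs.mpr h1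
    rwa [Int.natAbs_pow, Int.natAbs_mul, Int.natAbs_mul, Int.natAbs_pow,
      Int.natAbs_natCast, Int.natAbs_natCast] at h3
  have hcopr : Nat.Coprime (r^γ) (cof P t i * 4^k) := by
    apply Nat.Coprime.pow_left
    rw [hrprime.coprime_iff_not_dvd]
    intro hdv
    rcases (Nat.Prime.dvd_mul hrprime).1 hdv with h | h
    · revert h
      fin_cases i <;> simp only [cof] <;> intro h
      · rcases (Nat.Prime.dvd_mul hrprime).1 h with h' | h'
        · rcases (Nat.Prime.dvd_mul hrprime).1 h' with h'' | h''
          · exact hnot2pow t h''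
          · exact hnotPj 1 (by decide) h''
        · exact hnotPj 2 (by decide) h'
      · rcases (Nat.Prime.dvd_mul hrprime).1 h with h' | h'
        · rcases (Nat.Prime.dvd_mul hrprime).1 h' with h'' | h''
          · exact hnot2pow t h''
          · exact hnotPj 0 (by decide) h''
        · exact hnotPj 2 (by decide) h'
      · rcases (Nat.Prime.dvd_mul hrprime).1 h with h' | h'
        · exact hnotPj 0 (by decide) h'
        · exact hnotPj 1 (by decide) h'
    · have : r ∣ 2^(2*k) := by
        rwa [show (4:ℕ)^k = 2^(2*k) by rw [pow_mul]; norm_num] at h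
      exact hnot2pow _ this
  have hfinal : r^γ ∣ m.natAbs := hcopr.dvd_of_dvd_mul_left hdvdN
  have := (Nat.Prime.pow_dvd_iff_le_factorization hrprime hM0).1 hfinal
  omega

include hPpos in
lemma num_lemma {x : ℝ} (hx : x ∈ ZS P t 0 ∪ ZS P t 1 ∪ ZS P t 2) {i : Fin 3}
    (hw : Wit P t i x) :
    ∃ N : ℤ, x * ((Qv P t : ℕ) : ℝ) = N ∧ ∀ j, j ≠ i → ((P j : ℕ) : ℤ) ∣ N := by
  have hx' : ∃ s, x ∈ ZS P t s := by
    rcases hx with (h | h) | h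
    exacts [⟨0, h⟩, ⟨1, h⟩, ⟨2, h⟩]
  obtain ⟨s, hs⟩ := hx'
  obtain ⟨k, m, hk, hm, hxQ, -⟩ := rep_lemma P t hPpos s hs
  obtain ⟨r, γ, hrprime, hγpos, hrP, hnot⟩ := hw
  by_cases hsi : s = i
  · subst hsi
    refine ⟨((cof P t s : ℕ) : ℤ) * 4^k * m, hxQ, fun j hj => ?_⟩
    exact Dvd.dvd.mul_right (Dvd.dvd.mul_right
      (Int.natCast_dvd_natCast.2 (cof_dvd P t s j hj)) _) _
  · exfalso
    apply hnot _ hxQ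
    have h1 : (P i : ℤ) ∣ ((cof P t s : ℕ) : ℤ) := Int.natCast_dvd_natCast.2 (cof_dvd P t s i (fun h => hsi h.symm))
    have h2 : ((r:ℤ)^γ) ∣ (P i : ℤ) := by exact_mod_cast Int.natCast_dvd_natCast.2 hrP
    exact dvd_trans h2 (Dvd.dvd.mul_right (Dvd.dvd.mul_right h1 _) _)

include hPpos in
lemma no_two_wits {x : ℝ} (hx : x ∈ ZS P t 0 ∪ ZS P t 1 ∪ ZS P t 2) {i j : Fin 3}
    (hij : i ≠ j) (hwi : Wit P t i x) (hwj : Wit P t j x) : False := by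
  obtain ⟨N, hN, hdvd⟩ := num_lemma P t hPpos hx hwi
  obtain ⟨r, γ, hrprime, hγpos, hrP, hnot⟩ := hwj
  apply hnot N hN
  exact dvd_trans (by exact_mod_cast Int.natCast_dvd_natCast.2 hrP) (hdvd j (Ne.symm hij))

include hPpos in
lemma diff_wits {x y : ℝ}
    (hx : x ∈ ZS P t 0 ∪ ZS P t 1 ∪ ZS P t 2) (hy : y ∈ ZS P t 0 ∪ ZS P t 1 ∪ ZS P t 2)
    {i j : Fin 3} (hij : i ≠ j) (hwi : Wit P t i x) (hwj : Wit P t j y) :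
    Wit P t i (x - y) ∧ Wit P t j (x - y) := by
  obtain ⟨Nx, hNx, hdvdx⟩ := num_lemma P t hPpos hx hwi
  obtain ⟨Ny, hNy, hdvdy⟩ := num_lemma P t hPpos hy hwj
  constructor
  · obtain ⟨r, γ, hrprime, hγpos, hrP, hnot⟩ := hwi
    refine ⟨r, γ, hrprime, hγpos, hrP, fun N hN hd => ?_⟩
    have hNeq : N = Nx - Ny := by
      have : ((N:ℤ):ℝ) = ((Nx - Ny : ℤ):ℝ) := by
        push_cast
        rw [← hNx, ← hNy, ← hN]; ring
      exact_mod_cast this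
    apply hnot Nx hNx
    have hPiNy : ((r:ℤ)^γ) ∣ Ny :=
      dvd_trans (by exact_mod_cast Int.natCast_dvd_natCast.2 hrP) (hdvdy i hij)
    have : ((r:ℤ)^γ) ∣ Nx := by
      have := dvd_add hd hPiNy
      rwa [hNeq, sub_add_cancel] at this
    exact this
  · obtain ⟨r, γ, hrprime, hγpos, hrP, hnot⟩ := hwj
    refine ⟨r, γ, hrprime, hγpos, hrP, fun N hN hd => ?_⟩
    have hNeq : N = Nx - Ny := by
      have : ((N:ℤ):ℝ) = ((Nx - Ny : ℤ):ℝ) := by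
        push_cast
        rw [← hNx, ← hNy, ← hN]; ring
      exact_mod_cast this
    apply hnot Ny hNy
    have hPjNx : ((r:ℤ)^γ) ∣ Nx :=
      dvd_trans (by exact_mod_cast Int.natCast_dvd_natCast.2 hrP) (hdvdx j (Ne.symm hij))
    have : ((r:ℤ)^γ) ∣ Ny := by
      have := dvd_sub hPjNx hd
      rwa [hNeq, sub_sub_cancel] at this
    exact this

lemma Zsc_mono (q : ℝ) (hq : q ≠ 0) (p : ℕ) (hp : Odd p) (hppos : 0 < p) :
    Zsc q ⊆ Zsc (q * p) := by
  rintro x ⟨n, hn, m, hm, hx⟩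
  refine ⟨n, hn, m * p, ?_, ?_⟩
  · exact hm.mul (by exact_mod_cast hp : Odd (p:ℤ))
  · rw [hx]
    have hp0 : (p:ℝ) ≠ 0 := by positivity
    push_cast
    field_simp

lemma Zsc_even_sub (t : ℕ) (heven : Even t) (p : ℕ) (hp : Odd p) (hppos : 0 < p) :
    Zsc 2 ⊆ Zsc ((2:ℝ)^(t+1) * p) := by
  rintro x ⟨n, hn, m, hm, hx⟩
  obtain ⟨s, hs⟩ := heven
  refine ⟨n + s, by omega, m * p, hm.mul (by exact_mod_cast hp : Odd (p:ℤ)), ?_⟩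
  rw [hx]
  have hp0 : (p:ℝ) ≠ 0 := by positivity
  have h4 : ((4:ℝ))^(n+s) = 4^n * 2^t := by
    rw [pow_add, hs]
    congr 1
    rw [show (4:ℝ) = 2^2 by norm_num, ← pow_mul, two_mul]
  rw [h4]
  push_cast
  rw [pow_succ]
  field_simp

include hPodd hPpos hcop in
lemma endgame (Λ' : Set ℝ)
    (hmem : ∀ x ∈ Λ', x ∈ ZS P t 0 ∪ ZS P t 1 ∪ ZS P t 2)
    (hdiff : ∀ x ∈ Λ', ∀ y ∈ Λ', x ≠ y → (x - y) ∈ ZS P t 0 ∪ ZS P t 1 ∪ ZS P t 2) :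
    Λ' ⊆ Zsc 2 ∪ ZS P t 2 ∨ Λ' ⊆ ZS P t 0 ∪ Zsc ((2:ℝ)^(t+1)) ∨
      Λ' ⊆ ZS P t 1 ∪ Zsc ((2:ℝ)^(t+1)) := by
  have hZ2sub : ∀ i : Fin 3, i ≠ 2 → Zsc 2 ⊆ ZS P t i := by
    intro i hi
    have h2 : (2:ℝ)^(eEx t i) = 2 := by
      fin_cases i
      · simp [eEx]
      · simp [eEx]
      · exact absurd rfl hi
    unfold ZS
    rw [h2]
    exact Zsc_mono 2 (by norm_num) (P i) (hPodd i) (hPpos i)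
  have hZ3sub : Zsc ((2:ℝ)^(t+1)) ⊆ ZS P t 2 := by
    unfold ZS
    have he : ((2:ℝ)^(eEx t 2) * (P 2 : ℝ)) = (2:ℝ)^(t+1) * (P 2 : ℝ) := by simp [eEx]
    rw [he]
    exact Zsc_mono _ (by positivity) (P 2) (hPodd 2) (hPpos 2)
  -- extract witnesses from failure of each option
  by_contra hcon
  push_neg at hcon
  obtain ⟨h1, h2, h3⟩ := hcon
  rw [Set.not_subset] at h1 h2 h3
  obtain ⟨xa, hxa, hxa2⟩ := h1
  obtain ⟨xb, hxb, hxb2⟩ := h2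
  obtain ⟨xc, hxc, hxc2⟩ := h3
  simp only [Set.mem_union, not_or] at hxa2 hxb2 hxc2
  -- xa has Wit 0 or Wit 1
  have hwa : Wit P t 0 xa ∨ Wit P t 1 xa := by
    rcases hmem xa hxa with (h | h) | h
    · left
      apply wit_lemma P t hPodd hPpos hcop 0 h
      intro hmem2
      exact hxa2.1 (by
        have : Zsc ((2:ℝ)^(eEx t 0)) = Zsc 2 := by norm_num [eEx]
        rwa [this] at hmem2)
    · right
      apply wit_lemma P t hPodd hPpos hcop 1 h
      intro hmem2
      exact hxa2.1 (by
        have : Zsc ((2:ℝ)^(eEx t 1)) = Zsc 2 := by norm_num [eEx]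
        rwa [this] at hmem2)
    · exact absurd h hxa2.2
  -- xb has Wit 1 or Wit 2
  have hwb : Wit P t 1 xb ∨ Wit P t 2 xb := by
    rcases hmem xb hxb with (h | h) | h
    · exact absurd h hxb2.1
    · left
      apply wit_lemma P t hPodd hPpos hcop 1 h
      intro hmem2
      apply hxb2.1
      apply hZ2sub 0 (by decide)
      have : Zsc ((2:ℝ)^(eEx t 1)) = Zsc 2 := by norm_num [eEx]
      rwa [this] at hmem2
    · right
      apply wit_lemma P t hPodd hPpos hcop 2 h
      intro hmem2
      apply hxb2.2
      have : Zsc ((2:ℝ)^(eEx t 2)) = Zsc ((2:ℝ)^(t+1)) := by norm_num [eEx]; rfl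
      rwa [this] at hmem2
  -- xc has Wit 0 or Wit 2
  have hwc : Wit P t 0 xc ∨ Wit P t 2 xc := by
    rcases hmem xc hxc with (h | h) | h
    · left
      apply wit_lemma P t hPodd hPpos hcop 0 h
      intro hmem2
      apply hxc2.1
      apply hZ2sub 1 (by decide)
      have : Zsc ((2:ℝ)^(eEx t 0)) = Zsc 2 := by norm_num [eEx]
      rwa [this] at hmem2
    · exact absurd h hxc2.1
    · right
      apply wit_lemma P t hPodd hPpos hcop 2 h
      intro hmem2
      apply hxc2.2
      have : Zsc ((2:ℝ)^(eEx t 2)) = Zsc ((2:ℝ)^(t+1)) := by norm_num [eEx]; rfl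
      rwa [this] at hmem2
  -- pair two witnesses of distinct indices
  have key : ∀ (x y : ℝ), x ∈ Λ' → y ∈ Λ' → ∀ (i j : Fin 3), i ≠ j →
      Wit P t i x → Wit P t j y → False := by
    intro x y hxm hym i j hij hwi hwj
    by_cases hxy : x = y
    · subst hxy
      exact no_two_wits P t hPpos (hmem x hxm) hij hwi hwj
    · obtain ⟨hwi', hwj'⟩ := diff_wits P t hPpos (hmem x hxm) (hmem y hym) hij hwi hwj
      exact no_two_wits P t hPpos (hdiff x hxm y hym hxy) hij hwi' hwj'
  rcases hwa with hw0 | hw1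
  · rcases hwb with hwb1 | hwb2
    · exact key xa xb hxa hxb 0 1 (by decide) hw0 hwb1
    · exact key xa xb hxa hxb 0 2 (by decide) hw0 hwb2
  · rcases hwc with hwc0 | hwc2
    · exact key xa xc hxa hxc 1 0 (by decide) hw1 hwc0
    · exact key xa xc hxa hxc 1 2 (by decide) hw1 hwc2
end endgame


theorem stmt16 (a b c : ℤ) (t t' : ℕ) (l l' : ℤ)
    (ha : 0 < a) (hac : a < c) (haodd : Odd a) (hcodd : Odd c)
    (hbeven : Even b) (hb : 0 < b)
    (hgcd : Int.gcd a (Int.gcd b c) = 1)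
    (ht : 1 ≤ t) (ht' : 1 ≤ t') (hl : Odd l) (hl' : Odd l')
    (hbe : b = 2 ^ t * l) (hcae : c - a = 2 ^ t' * l')
    (μ : Measure ℝ) (hμ : IsSelfSimilarMeasure 4 ({0, a, b, c} : Finset ℤ) μ)
    (Λ : Set ℝ) (h0Λ : (0 : ℝ) ∈ Λ) (horth : IsOrthogonalSetFor Λ μ) :
    (Λ \ {0} ⊆ Zsc 2 ∪ Zsc (2 ^ (t + 1) * (Int.gcd l l' : ℝ)) ∨
     Λ \ {0} ⊆ Zsc (2 * (Int.gcd a (c - b) : ℝ)) ∪ Zsc (2 ^ (t + 1)) ∨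
     Λ \ {0} ⊆ Zsc (2 * (Int.gcd c (b - a) : ℝ)) ∪ Zsc (2 ^ (t + 1))) ∧
    (Even t →
      (Λ \ {0} ⊆ Zsc (2 ^ (t + 1) * (Int.gcd l l' : ℝ)) ∨
       Λ \ {0} ⊆ Zsc (2 * (Int.gcd a (c - b) : ℝ)) ∪ Zsc (2 ^ (t + 1)) ∨
       Λ \ {0} ⊆ Zsc (2 * (Int.gcd c (b - a) : ℝ)) ∪ Zsc (2 ^ (t + 1)))) := by
  classical
  have hprob : IsProbabilityMeasure μ := hμ.1
  have ha0 : a ≠ 0 := ha.ne'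
  have hc0 : c ≠ 0 := (ha.trans hac).ne'
  have hl0 : l ≠ 0 := by
    rintro rfl
    rw [mul_zero] at hbe
    exact hb.ne' hbe
  have hodd_of_dvd : ∀ (p : ℕ) (A : ℤ), ((p:ℤ) ∣ A) → Odd A → Odd p := by
    intro p A hdvd hA
    rcases Nat.even_or_odd p with he | ho
    · exfalso
      obtain ⟨s, hs⟩ := he
      have h2 : (2:ℤ) ∣ (p:ℤ) := ⟨s, by push_cast [hs]; ring⟩
      obtain ⟨r, hr⟩ := dvd_trans h2 hdvd
      have : Even A := ⟨r, by omega⟩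
      exact (Int.not_odd_iff_even).2 this hA
    · exact ho
  have hp1odd : Odd (Int.gcd a (c - b)) := hodd_of_dvd _ a (Int.gcd_dvd_left _ _) haodd
  have hp2odd : Odd (Int.gcd c (b - a)) := hodd_of_dvd _ c (Int.gcd_dvd_left _ _) hcodd
  have hp3odd : Odd (Int.gcd l l') := hodd_of_dvd _ l (Int.gcd_dvd_left _ _) hl
  have hp1pos : 0 < Int.gcd a (c - b) := Int.gcd_pos_of_ne_zero_left _ ha0
  have hp2pos : 0 < Int.gcd c (b - a) := Int.gcd_pos_of_ne_zero_left _ hc0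
  have hp3pos : 0 < Int.gcd l l' := Int.gcd_pos_of_ne_zero_left _ hl0
  -- no prime divides a, b and c simultaneously
  have habc : ∀ q : ℕ, q.Prime → ((q:ℤ) ∣ a) → ((q:ℤ) ∣ b) → ((q:ℤ) ∣ c) → False := by
    intro q hq hqa hqb hqc
    have h1 : (q:ℤ) ∣ ((Int.gcd b c : ℕ) : ℤ) := Int.natCast_dvd_natCast.2 (Int.dvd_gcd hqb hqc)
    have h2 : (q:ℤ) ∣ ((Int.gcd a ((Int.gcd b c : ℕ) : ℤ) : ℕ) : ℤ) := Int.natCast_dvd_natCast.2 (Int.dvd_gcd hqa h1)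
    rw [hgcd] at h2
    have : q ∣ 1 := by exact_mod_cast h2
    exact hq.one_lt.ne' (Nat.dvd_one.1 this)
  have hcop12 : Nat.Coprime (Int.gcd a (c - b)) (Int.gcd c (b - a)) := by
    by_contra hnc
    obtain ⟨q, hq, hq1, hq2⟩ := Nat.Prime.not_coprime_iff_dvd.1 hnc
    have d1 : (q:ℤ) ∣ a := dvd_trans (Int.natCast_dvd_natCast.2 hq1) (Int.gcd_dvd_left _ _)
    have d2 : (q:ℤ) ∣ c - b := dvd_trans (Int.natCast_dvd_natCast.2 hq1) (Int.gcd_dvd_right _ _)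
    have d3 : (q:ℤ) ∣ c := dvd_trans (Int.natCast_dvd_natCast.2 hq2) (Int.gcd_dvd_left _ _)
    have d4 : (q:ℤ) ∣ b := by
      have := dvd_sub d3 d2
      rwa [show c - (c - b) = b by ring] at this
    exact habc q hq d1 d4 d3
  have hcop13 : Nat.Coprime (Int.gcd a (c - b)) (Int.gcd l l') := by
    by_contra hnc
    obtain ⟨q, hq, hq1, hq2⟩ := Nat.Prime.not_coprime_iff_dvd.1 hnc
    have d1 : (q:ℤ) ∣ a := dvd_trans (Int.natCast_dvd_natCast.2 hq1) (Int.gcd_dvd_left _ _)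
    have d2 : (q:ℤ) ∣ c - b := dvd_trans (Int.natCast_dvd_natCast.2 hq1) (Int.gcd_dvd_right _ _)
    have dl : (q:ℤ) ∣ l := dvd_trans (Int.natCast_dvd_natCast.2 hq2) (Int.gcd_dvd_left _ _)
    have db : (q:ℤ) ∣ b := by rw [hbe]; exact dl.mul_left _
    have dc : (q:ℤ) ∣ c := by
      have := dvd_add d2 db
      rwa [show c - b + b = c by ring] at this
    exact habc q hq d1 db dc
  have hcop23 : Nat.Coprime (Int.gcd c (b - a)) (Int.gcd l l') := by
    by_contra hnc
    obtain ⟨q, hq, hq1, hq2⟩ := Nat.Prime.not_coprime_iff_dvd.1 hnc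
    have d1 : (q:ℤ) ∣ c := dvd_trans (Int.natCast_dvd_natCast.2 hq1) (Int.gcd_dvd_left _ _)
    have d2 : (q:ℤ) ∣ b - a := dvd_trans (Int.natCast_dvd_natCast.2 hq1) (Int.gcd_dvd_right _ _)
    have dl : (q:ℤ) ∣ l := dvd_trans (Int.natCast_dvd_natCast.2 hq2) (Int.gcd_dvd_left _ _)
    have db : (q:ℤ) ∣ b := by rw [hbe]; exact dl.mul_left _
    have da : (q:ℤ) ∣ a := by
      have := dvd_sub db d2
      rwa [show b - (b - a) = a by ring] at this
    exact habc q hq da db d1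
  set P : Fin 3 → ℕ := ![Int.gcd a (c - b), Int.gcd c (b - a), Int.gcd l l'] with hPdef
  have hPodd : ∀ i, Odd (P i) := by
    intro i
    fin_cases i
    · exact hp1odd
    · exact hp2odd
    · exact hp3odd
  have hPpos : ∀ i, 0 < P i := by
    intro i
    fin_cases i
    · exact hp1pos
    · exact hp2pos
    · exact hp3pos
  have hcopP : ∀ i j, i ≠ j → Nat.Coprime (P i) (P j) := by
    intro i j hij
    fin_cases i <;> fin_cases j
    · exact absurd rfl hij
    · exact hcop12
    · exact hcop13
    · exact hcop12.symm
    · exact absurd rfl hij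
    · exact hcop23
    · exact hcop13.symm
    · exact hcop23.symm
    · exact absurd rfl hij
  have e0 : ZS P t 0 = Zsc (2 * ((Int.gcd a (c - b) : ℕ) : ℝ)) := by
    simp [ZS, eEx, hPdef]
  have e1 : ZS P t 1 = Zsc (2 * ((Int.gcd c (b - a) : ℕ) : ℝ)) := by
    simp [ZS, eEx, hPdef]
  have e2 : ZS P t 2 = Zsc ((2:ℝ)^(t+1) * ((Int.gcd l l' : ℕ) : ℝ)) := by
    simp [ZS, eEx, hPdef]
  have hrec : ∀ ξ : ℝ, ∫ x, eC (ξ * x) ∂μ = Mk a b c (ξ/4) * ∫ x, eC ((ξ/4) * x) ∂μ :=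
    F_rec ha hac haodd hcodd hbeven hb hμ
  have main : ∀ ξ : ℝ, (∫ x, eC (ξ * x) ∂μ) = 0 →
      ξ ∈ ZS P t 0 ∪ ZS P t 1 ∪ ZS P t 2 := by
    intro ξ h
    obtain ⟨k, hk, hMk⟩ := exists_mask_zero hprob hrec ξ h
    have hmask := mask_mem _ hMk
    rcases mask_zero_cases a b c t t' l l' haodd hcodd hbeven hbe hcae hl hl' _ hmask with
      ⟨w, hw, heq⟩ | ⟨w, hw, heq⟩ | ⟨-, w, hw, heq⟩
    · left; left
      rw [e0]
      exact Zsc_of_eq (by have := hp1pos; positivity) hk hw heq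
    · left; right
      rw [e1]
      exact Zsc_of_eq (by have := hp2pos; positivity) hk hw heq
    · right
      rw [e2]
      exact Zsc_of_eq (by have := hp3pos; positivity) hk hw heq
  have hΛmem : ∀ x ∈ Λ \ {(0:ℝ)}, x ∈ ZS P t 0 ∪ ZS P t 1 ∪ ZS P t 2 := by
    intro x hx
    have hxne : x ≠ 0 := by simpa using hx.2
    have h := horth x hx.1 0 h0Λ hxne
    apply main x
    rw [← h]
    apply integral_congr_ae
    refine Filter.Eventually.of_forall fun y => ?_
    exact ((expChar_mul_conj x 0 y).trans (by rw [sub_zero])).symm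
  have hΛdiff : ∀ x ∈ Λ \ {(0:ℝ)}, ∀ y ∈ Λ \ {(0:ℝ)}, x ≠ y →
      (x - y) ∈ ZS P t 0 ∪ ZS P t 1 ∪ ZS P t 2 := by
    intro x hx y hy hne
    have h := horth x hx.1 y hy.1 hne
    apply main (x - y)
    rw [← h]
    apply integral_congr_ae
    refine Filter.Eventually.of_forall fun z => ?_
    exact (expChar_mul_conj x y z).symm
  have htri := endgame P t hPodd hPpos hcopP (Λ \ {0}) hΛmem hΛdiff
  constructor
  · rcases htri with h | h | h
    · left; rwa [e2] at h
    · right; left; rwa [e0] at h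
    · right; right; rwa [e1] at h
  · intro hteven
    rcases htri with h | h | h
    · left
      have hsub : Zsc 2 ⊆ Zsc ((2:ℝ)^(t+1) * ((Int.gcd l l' : ℕ) : ℝ)) :=
        Zsc_even_sub t hteven _ hp3odd hp3pos
      intro x hx
      rcases h hx with h2 | h2
      · exact hsub h2
      · rwa [e2] at h2
    · right; left; rwa [e0] at h
    · right; right; rwa [e1] at h


end
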